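/- For every LTL formula Φ in the syntactic class TL_Prefix, there exists a deterministic ω-automaton A over the alphabet 2^V with a prefix acceptance condition (given by finitely many pairs of state sets (F_j, E_j) for j = 0,…,f, a run β is accepting iff for every j, either β stays in F_j at all times or β visits E_j at least once) such that A has at most 2^(2^|Φ|) states and A accepts exactly the set of infinite words w with w ⊨ Φ. -/

import Mathlib

/-- LTL formulas over atomic propositions `V`: the constant `true`, variables,
negation, disjunction, next (`X`), and strong until (`SU`). -/
inductive LTL (V : Type) : Type
  | tt : LTL V
  | var : V → LTL V
  | lnot : LTL V → LTL V
  | lor : LTL V → LTL V → LTL V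
  | lnext : LTL V → LTL V
  | lsu : LTL V → LTL V → LTL V

namespace LTL

variable {V : Type}

/-- Semantics: `Sat w φ i` means `w, i ⊨ φ` for an infinite word `w : ℕ → Set V`.
In particular `w, i ⊨ ψ SU φ` iff there is `k ≥ i` with `w, k ⊨ ψ` and
`w, j ⊨ φ` for all `i ≤ j < k`. -/
def Sat (w : ℕ → Set V) : LTL V → ℕ → Prop
  | tt, _ => True
  | var v, i => v ∈ w i
  | lnot φ, i => ¬ Sat w φ i
  | lor φ ψ, i => Sat w φ i ∨ Sat w ψ i
  | lnext φ, i => Sat w φ (i + 1)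
  | lsu ψ φ, i => ∃ k, i ≤ k ∧ Sat w ψ k ∧ ∀ j, i ≤ j → j < k → Sat w φ j

/-- Conjunction, as the abbreviation `¬(¬φ ∨ ¬ψ)`. -/
def land (φ ψ : LTL V) : LTL V := lnot (lor (lnot φ) (lnot ψ))

/-- `F φ := φ SU true`. -/
def lF (φ : LTL V) : LTL V := lsu φ tt

/-- `G φ := ¬ F ¬ φ`. -/
def lG (φ : LTL V) : LTL V := lnot (lF (lnot φ))

/-- Weak until: `ψ U φ := (ψ SU φ) ∨ G φ`. -/
def lwu (ψ φ : LTL V) : LTL V := lor (lsu ψ φ) (lG φ)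

/-- Number of nodes of the syntax tree. -/
def size : LTL V → ℕ
  | tt => 1
  | var _ => 1
  | lnot φ => size φ + 1
  | lor φ ψ => size φ + size ψ + 1
  | lnext φ => size φ + 1
  | lsu ψ φ => size ψ + size φ + 1

mutual
  /-- The syntactic class `TL_G`. -/
  inductive TLG : LTL V → Prop
    | var (v : V) : TLG (LTL.var v)
    | not {φ : LTL V} : TLF φ → TLG (LTL.lnot φ)
    | and {φ ψ : LTL V} : TLG φ → TLG ψ → TLG (LTL.land φ ψ)
    | or {φ ψ : LTL V} : TLG φ → TLG ψ → TLG (LTL.lor φ ψ)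
    | next {φ : LTL V} : TLG φ → TLG (LTL.lnext φ)
    | alw {φ : LTL V} : TLG φ → TLG (LTL.lG φ)
    | wu {ψ φ : LTL V} : TLG ψ → TLG φ → TLG (LTL.lwu ψ φ)
  /-- The syntactic class `TL_F`. -/
  inductive TLF : LTL V → Prop
    | var (v : V) : TLF (LTL.var v)
    | not {φ : LTL V} : TLG φ → TLF (LTL.lnot φ)
    | and {φ ψ : LTL V} : TLF φ → TLF ψ → TLF (LTL.land φ ψ)
    | or {φ ψ : LTL V} : TLF φ → TLF ψ → TLF (LTL.lor φ ψ)
    | next {φ : LTL V} : TLF φ → TLF (LTL.lnext φ)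
    | ev {φ : LTL V} : TLF φ → TLF (LTL.lF φ)
    | su {ψ φ : LTL V} : TLF ψ → TLF φ → TLF (LTL.lsu ψ φ)
end

end LTL

/-- The unique run of a deterministic automaton with transition function `δ`
and initial state `s0` on the infinite word `w`. -/
def detRun {S A : Type} (δ : S → A → S) (s0 : S) (w : ℕ → A) : ℕ → S
  | 0 => s0
  | t + 1 => δ (detRun δ s0 w t) (w t)

namespace LTL

variable {V : Type}

/-- The syntactic class `TL_Prefix`: the closure of `TL_G ∪ TL_F` under `¬, ∧, ∨`. -/
inductive TLPrefix : LTL V → Prop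
  | g {φ : LTL V} : TLG φ → TLPrefix φ
  | f {φ : LTL V} : TLF φ → TLPrefix φ
  | not {φ : LTL V} : TLPrefix φ → TLPrefix (LTL.lnot φ)
  | and {φ ψ : LTL V} : TLPrefix φ → TLPrefix ψ → TLPrefix (LTL.land φ ψ)
  | or {φ ψ : LTL V} : TLPrefix φ → TLPrefix ψ → TLPrefix (LTL.lor φ ψ)

end LTL

namespace LTLProof

open LTL

variable {V : Type}

/-! ### Subformulas -/

def sub : LTL V → List (LTL V)
  | .tt => [.tt]
  | .var v => [.var v]
  | .lnot φ => .lnot φ :: sub φ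
  | .lor φ ψ => .lor φ ψ :: (sub φ ++ sub ψ)
  | .lnext φ => .lnext φ :: sub φ
  | .lsu ψ φ => .lsu ψ φ :: (sub ψ ++ sub φ)

theorem self_mem_sub (φ : LTL V) : φ ∈ sub φ := by
  cases φ <;> simp [sub]

theorem sub_length (φ : LTL V) : (sub φ).length = size φ := by
  induction φ <;> simp [sub, size, *] <;> try omega

theorem sub_trans {φ ψ : LTL V} (h : ψ ∈ sub φ) : sub ψ ⊆ sub φ := by
  induction φ with
  | tt => simp [sub] at h; subst h; exact fun _ h => h
  | var v => simp [sub] at h; subst h; exact fun _ h => h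
  | lnot φ ih =>
    simp [sub] at h
    rcases h with h | h
    · subst h; exact fun _ h => h
    · exact fun x hx => by simp [sub]; right; exact ih h hx
  | lor φ ψ ih1 ih2 =>
    simp [sub] at h
    rcases h with h | h | h
    · subst h; exact fun _ h => h
    · exact fun x hx => by simp [sub]; right; left; exact ih1 h hx
    · exact fun x hx => by simp [sub]; right; right; exact ih2 h hx
  | lnext φ ih =>
    simp [sub] at h
    rcases h with h | h
    · subst h; exact fun _ h => h
    · exact fun x hx => by simp [sub]; right; exact ih h hx
  | lsu ψ φ ih1 ih2 =>
    simp [sub] at h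
    rcases h with h | h | h
    · subst h; exact fun _ h => h
    · exact fun x hx => by simp [sub]; right; left; exact ih1 h hx
    · exact fun x hx => by simp [sub]; right; right; exact ih2 h hx

/-! ### Truncated semantics with horizon assignment -/

/-- Satisfaction where positions `< t` are interpreted in `w`, and at the
horizon `t` every subformula `χ` is assigned the truth value `a χ`. -/
def SatA (w : ℕ → Set V) (t : ℕ) (a : LTL V → Prop) : LTL V → ℕ → Prop
  | .tt, i => if t ≤ i then a .tt else True
  | .var v, i => if t ≤ i then a (.var v) else v ∈ w i
  | .lnot φ, i => if t ≤ i then a (.lnot φ) else ¬ SatA w t a φ i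
  | .lor φ ψ, i => if t ≤ i then a (.lor φ ψ) else (SatA w t a φ i ∨ SatA w t a ψ i)
  | .lnext φ, i => if t ≤ i then a (.lnext φ) else SatA w t a φ (i+1)
  | .lsu ψ φ, i => if t ≤ i then a (.lsu ψ φ) else
      ((∃ k, i ≤ k ∧ k < t ∧ SatA w t a ψ k ∧ ∀ j, i ≤ j → j < k → SatA w t a φ j) ∨
       ((∀ j, i ≤ j → j < t → SatA w t a φ j) ∧ a (.lsu ψ φ)))

/-- Optimistic (`b = true`) and pessimistic (`b = false`) truncated semantics. -/
def SatB (w : ℕ → Set V) (t : ℕ) : Bool → LTL V → ℕ → Prop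
  | b, .tt, i => if t ≤ i then b = true else True
  | b, .var v, i => if t ≤ i then b = true else v ∈ w i
  | b, .lnot φ, i => if t ≤ i then b = true else ¬ SatB w t (!b) φ i
  | b, .lor φ ψ, i => if t ≤ i then b = true else (SatB w t b φ i ∨ SatB w t b ψ i)
  | b, .lnext φ, i => if t ≤ i then b = true else SatB w t b φ (i+1)
  | b, .lsu ψ φ, i => if t ≤ i then b = true else
      ((∃ k, i ≤ k ∧ k < t ∧ SatB w t b ψ k ∧ ∀ j, i ≤ j → j < k → SatB w t b φ j) ∨
       ((∀ j, i ≤ j → j < t → SatB w t b φ j) ∧ b = true))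

/-- One-step update of a horizon assignment, reading letter `σ`. -/
def step (σ : Set V) (a : LTL V → Prop) : LTL V → Prop
  | .tt => True
  | .var v => v ∈ σ
  | .lnot φ => ¬ step σ a φ
  | .lor φ ψ => step σ a φ ∨ step σ a ψ
  | .lnext φ => a φ
  | .lsu ψ φ => step σ a ψ ∨ (step σ a φ ∧ a (.lsu ψ φ))

theorem satA_horizon (w : ℕ → Set V) {t i : ℕ} (h : t ≤ i) (a : LTL V → Prop)
    (φ : LTL V) : SatA w t a φ i ↔ a φ := by
  cases φ <;> simp [SatA, h]

theorem satB_horizon (w : ℕ → Set V) {t i : ℕ} (h : t ≤ i) (b : Bool)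
    (φ : LTL V) : SatB w t b φ i ↔ b = true := by
  cases φ <;> simp [SatB, h]

/-- L5: `SatA` only depends on the value of `a` on subformulas. -/
theorem satA_congr (w : ℕ → Set V) (t : ℕ) {a b : LTL V → Prop} (φ : LTL V)
    (h : ∀ χ ∈ sub φ, (a χ ↔ b χ)) (i : ℕ) : SatA w t a φ i ↔ SatA w t b φ i := by
  induction φ generalizing i with
  | tt =>
    by_cases hti : t ≤ i
    · simpa [SatA, hti] using h _ (self_mem_sub _)
    · simp [SatA, hti]
  | var v =>
    by_cases hti : t ≤ i
    · simpa [SatA, hti] using h _ (self_mem_sub _)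
    · simp [SatA, hti]
  | lnot φ ih =>
    have e : ∀ j, SatA w t a φ j ↔ SatA w t b φ j :=
      ih (fun χ hχ => h χ (List.mem_cons_of_mem _ hχ))
    by_cases hti : t ≤ i
    · simpa [SatA, hti] using h _ (self_mem_sub _)
    · simp only [SatA, if_neg hti, e]
  | lor φ ψ ih1 ih2 =>
    have e1 : ∀ j, SatA w t a φ j ↔ SatA w t b φ j :=
      ih1 (fun χ hχ => h χ (List.mem_cons_of_mem _ (List.mem_append_left _ hχ)))
    have e2 : ∀ j, SatA w t a ψ j ↔ SatA w t b ψ j :=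
      ih2 (fun χ hχ => h χ (List.mem_cons_of_mem _ (List.mem_append_right _ hχ)))
    by_cases hti : t ≤ i
    · simpa [SatA, hti] using h _ (self_mem_sub _)
    · simp only [SatA, if_neg hti, e1, e2]
  | lnext φ ih =>
    have e : ∀ j, SatA w t a φ j ↔ SatA w t b φ j :=
      ih (fun χ hχ => h χ (List.mem_cons_of_mem _ hχ))
    by_cases hti : t ≤ i
    · simpa [SatA, hti] using h _ (self_mem_sub _)
    · simp only [SatA, if_neg hti, e]
  | lsu ψ φ ih1 ih2 =>
    have e1 : ∀ j, SatA w t a ψ j ↔ SatA w t b ψ j :=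
      ih1 (fun χ hχ => h χ (List.mem_cons_of_mem _ (List.mem_append_left _ hχ)))
    have e2 : ∀ j, SatA w t a φ j ↔ SatA w t b φ j :=
      ih2 (fun χ hχ => h χ (List.mem_cons_of_mem _ (List.mem_append_right _ hχ)))
    have e0 : a (.lsu ψ φ) ↔ b (.lsu ψ φ) := h _ (self_mem_sub _)
    by_cases hti : t ≤ i
    · simpa [SatA, hti] using e0
    · simp only [SatA, if_neg hti, e1, e2, e0]

/-- L6: `step` only depends on the value of `a` on subformulas. -/
theorem step_congr (σ : Set V) {a b : LTL V → Prop} (φ : LTL V)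
    (h : ∀ χ ∈ sub φ, (a χ ↔ b χ)) : step σ a φ ↔ step σ b φ := by
  induction φ with
  | tt => simp [step]
  | var v => simp [step]
  | lnot φ ih =>
    have e := ih (fun χ hχ => h χ (List.mem_cons_of_mem _ hχ))
    simp only [step, e]
  | lor φ ψ ih1 ih2 =>
    have e1 := ih1 (fun χ hχ => h χ (List.mem_cons_of_mem _ (List.mem_append_left _ hχ)))
    have e2 := ih2 (fun χ hχ => h χ (List.mem_cons_of_mem _ (List.mem_append_right _ hχ)))
    simp only [step, e1, e2]
  | lnext φ ih =>
    simp only [step]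
    exact h _ (List.mem_cons_of_mem _ (self_mem_sub _))
  | lsu ψ φ ih1 ih2 =>
    have e1 := ih1 (fun χ hχ => h χ (List.mem_cons_of_mem _ (List.mem_append_left _ hχ)))
    have e2 := ih2 (fun χ hχ => h χ (List.mem_cons_of_mem _ (List.mem_append_right _ hχ)))
    have e0 := h _ (self_mem_sub (LTL.lsu ψ φ))
    simp only [step, e1, e2, e0]

/-- L4 -/
theorem satA_succ_horizon (w : ℕ → Set V) (t : ℕ) (a : LTL V → Prop) (φ : LTL V) :
    SatA w (t+1) a φ t ↔ step (w t) a φ := by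
  have hn : ¬ (t + 1 ≤ t) := by omega
  induction φ with
  | tt => simp [SatA, step, hn]
  | var v => simp [SatA, step, hn]
  | lnot φ ih => simp only [SatA, if_neg hn, step, ih]
  | lor φ ψ ih1 ih2 => simp only [SatA, if_neg hn, step, ih1, ih2]
  | lnext φ => simp only [SatA, if_neg hn, step]; exact satA_horizon w le_rfl a φ
  | lsu ψ φ ih1 ih2 =>
    simp only [SatA, if_neg hn, step]
    constructor
    · rintro (⟨k, hk1, hk2, hψ, -⟩ | ⟨hφ, ha⟩)
      · have : k = t := by omega
        subst this
        exact Or.inl (ih1.mp hψ)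
      · exact Or.inr ⟨ih2.mp (hφ t le_rfl (by omega)), ha⟩
    · rintro (hψ | ⟨hφ, ha⟩)
      · exact Or.inl ⟨t, le_rfl, by omega, ih1.mpr hψ, fun j h1 h2 => by omega⟩
      · refine Or.inr ⟨fun j h1 h2 => ?_, ha⟩
        have : j = t := by omega
        subst this
        exact ih2.mpr hφ

/-- L3 -/
theorem satA_succ (w : ℕ → Set V) (t : ℕ) (a : LTL V → Prop) (φ : LTL V) :
    ∀ i, i ≤ t → (SatA w (t+1) a φ i ↔ SatA w t (fun χ => step (w t) a χ) φ i) := by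
  induction φ with
  | tt =>
    intro i hi
    rcases eq_or_lt_of_le hi with rfl | hi
    · rw [satA_succ_horizon, satA_horizon w le_rfl]
    simp [SatA, show ¬ (t + 1 ≤ i) by omega, show ¬ (t ≤ i) by omega]
  | var v =>
    intro i hi
    rcases eq_or_lt_of_le hi with rfl | hi
    · rw [satA_succ_horizon, satA_horizon w le_rfl]
    simp [SatA, show ¬ (t + 1 ≤ i) by omega, show ¬ (t ≤ i) by omega]
  | lnot φ ih =>
    intro i hi
    rcases eq_or_lt_of_le hi with rfl | hi
    · rw [satA_succ_horizon, satA_horizon w le_rfl]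
    simp only [SatA, if_neg (show ¬ (t + 1 ≤ i) by omega), if_neg (show ¬ (t ≤ i) by omega)]
    rw [ih i (le_of_lt hi)]
  | lor φ ψ ih1 ih2 =>
    intro i hi
    rcases eq_or_lt_of_le hi with rfl | hi
    · rw [satA_succ_horizon, satA_horizon w le_rfl]
    simp only [SatA, if_neg (show ¬ (t + 1 ≤ i) by omega), if_neg (show ¬ (t ≤ i) by omega)]
    rw [ih1 i (le_of_lt hi), ih2 i (le_of_lt hi)]
  | lnext φ ih =>
    intro i hi
    rcases eq_or_lt_of_le hi with rfl | hi
    · rw [satA_succ_horizon, satA_horizon w le_rfl]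
    simp only [SatA, if_neg (show ¬ (t + 1 ≤ i) by omega), if_neg (show ¬ (t ≤ i) by omega)]
    exact ih (i+1) (by omega)
  | lsu ψ φ ih1 ih2 =>
    intro i hi
    rcases eq_or_lt_of_le hi with rfl | hi
    · rw [satA_succ_horizon, satA_horizon w le_rfl]
    have hψt : SatA w (t+1) a ψ t ↔ step (w t) a ψ := satA_succ_horizon w t a ψ
    have hφt : SatA w (t+1) a φ t ↔ step (w t) a φ := satA_succ_horizon w t a φ
    simp only [SatA, if_neg (show ¬ (t + 1 ≤ i) by omega), if_neg (show ¬ (t ≤ i) by omega),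
      step]
    constructor
    · rintro (⟨k, hk1, hk2, hψ, hφ⟩ | ⟨hφ, ha⟩)
      · rcases lt_or_ge k t with hkt | hkt
        · exact Or.inl ⟨k, hk1, hkt, (ih1 k (le_of_lt hkt)).mp hψ,
            fun j h1 h2 => (ih2 j (by omega)).mp (hφ j h1 h2)⟩
        · have hkt : k = t := by omega
          subst hkt
          exact Or.inr ⟨fun j h1 h2 => (ih2 j (by omega)).mp (hφ j h1 (by omega)),
            Or.inl (hψt.mp hψ)⟩
      · exact Or.inr ⟨fun j h1 h2 => (ih2 j (by omega)).mp (hφ j h1 (by omega)),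
          Or.inr ⟨hφt.mp (hφ t (by omega) (by omega)), ha⟩⟩
    · rintro (⟨k, hk1, hk2, hψ, hφ⟩ | ⟨hφ, (hψ | ⟨hlast, ha⟩)⟩)
      · exact Or.inl ⟨k, hk1, by omega, (ih1 k (le_of_lt hk2)).mpr hψ,
          fun j h1 h2 => (ih2 j (by omega)).mpr (hφ j h1 h2)⟩
      · exact Or.inl ⟨t, by omega, by omega, hψt.mpr hψ,
          fun j h1 h2 => (ih2 j (by omega)).mpr (hφ j h1 h2)⟩
      · refine Or.inr ⟨fun j h1 h2 => ?_, ha⟩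
        rcases lt_or_ge j t with hj | hj
        · exact (ih2 j (le_of_lt hj)).mpr (hφ j h1 hj)
        · have : j = t := by omega
          subst this
          exact hφt.mpr hlast

/-- L1: with the true future values at the horizon, `SatA` is `Sat`. -/
theorem satA_truth (w : ℕ → Set V) (t : ℕ) (φ : LTL V) {i : ℕ} (hi : i ≤ t) :
    SatA w t (fun χ => Sat w χ t) φ i ↔ Sat w φ i := by
  induction φ generalizing i with
  | tt =>
    by_cases hti : t ≤ i
    · have : i = t := by omega
      subst this
      simp [SatA]
    · simp [SatA, hti, Sat]
  | var v =>
    by_cases hti : t ≤ i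
    · have : i = t := by omega
      subst this
      simp [SatA]
    · simp [SatA, hti, Sat]
  | lnot φ ih =>
    by_cases hti : t ≤ i
    · have : i = t := by omega
      subst this
      simp [SatA]
    · simp only [SatA, if_neg hti, Sat]
      rw [ih (by omega)]
  | lor φ ψ ih1 ih2 =>
    by_cases hti : t ≤ i
    · have : i = t := by omega
      subst this
      simp [SatA]
    · simp only [SatA, if_neg hti, Sat]
      rw [ih1 (by omega), ih2 (by omega)]
  | lnext φ ih =>
    by_cases hti : t ≤ i
    · have : i = t := by omega
      subst this
      simp [SatA]
    · simp only [SatA, if_neg hti, Sat]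
      rcases eq_or_lt_of_le hi with rfl | hi'
      · omega
      · exact ih (by omega)
  | lsu ψ φ ih1 ih2 =>
    by_cases hti : t ≤ i
    · have : i = t := by omega
      subst this
      simp [SatA]
    · simp only [SatA, if_neg hti]
      constructor
      · rintro (⟨k, hk1, hk2, hψ, hφ⟩ | ⟨hφ, ha⟩)
        · exact ⟨k, hk1, (ih1 (le_of_lt hk2)).mp hψ,
            fun j h1 h2 => (ih2 (by omega)).mp (hφ j h1 h2)⟩
        · simp only [Sat] at ha ⊢
          obtain ⟨k, hk1, hψ, hφ'⟩ := ha
          refine ⟨k, by omega, hψ, fun j h1 h2 => ?_⟩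
          rcases lt_or_ge j t with hj | hj
          · exact (ih2 (le_of_lt hj)).mp (hφ j h1 hj)
          · exact hφ' j hj h2
      · rintro ⟨k, hk1, hψ, hφ⟩
        rcases lt_or_ge k t with hkt | hkt
        · exact Or.inl ⟨k, hk1, hkt, (ih1 (le_of_lt hkt)).mpr hψ,
            fun j h1 h2 => (ih2 (by omega)).mpr (hφ j h1 h2)⟩
        · refine Or.inr ⟨fun j h1 h2 => (ih2 (le_of_lt h2)).mpr (hφ j h1 (by omega)), ?_⟩
          exact ⟨k, hkt, hψ, fun j h1 h2 => hφ j (by omega) h2⟩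

/-- M1: monotonicity in the horizon. -/
theorem satB_mono (w : ℕ → Set V) {t t' : ℕ} (h : t ≤ t') (φ : LTL V) (i : ℕ) :
    (SatB w t' true φ i → SatB w t true φ i) ∧
    (SatB w t false φ i → SatB w t' false φ i) := by
  induction φ generalizing i with
  | tt =>
    constructor <;> intro hs
    · by_cases hti : t ≤ i <;> simp_all [SatB]
    · by_cases hti : t ≤ i
      · simp [SatB, hti] at hs
      · have hti' : ¬ (t' ≤ i) := by omega
        simp_all [SatB]
  | var v =>
    constructor <;> intro hs
    · by_cases hti : t ≤ i
      · simp [SatB, hti]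
      · have : ¬ (t' ≤ i) := by omega
        simp_all [SatB]
    · by_cases hti : t ≤ i
      · simp [SatB, hti] at hs
      · have hti' : ¬ (t' ≤ i) := by omega
        simp_all [SatB]
  | lnot φ ih =>
    constructor <;> intro hs
    · by_cases hti : t ≤ i
      · simp [SatB, hti]
      · have hti' : ¬ (t' ≤ i) := by omega
        simp only [SatB, if_neg hti', Bool.not_true] at hs
        simp only [SatB, if_neg hti, Bool.not_true]
        exact fun hc => hs ((ih i).2 hc)
    · by_cases hti : t ≤ i
      · simp [SatB, hti] at hs
      · by_cases hti' : t' ≤ i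
        · omega
        · simp only [SatB, if_neg hti', if_neg hti, Bool.not_false] at hs ⊢
          exact fun hc => hs ((ih i).1 hc)
  | lor φ ψ ih1 ih2 =>
    constructor <;> intro hs
    · by_cases hti : t ≤ i
      · simp [SatB, hti]
      · have hti' : ¬ (t' ≤ i) := by omega
        simp only [SatB, if_neg hti', if_neg hti] at hs ⊢
        exact hs.imp (ih1 i).1 (ih2 i).1
    · by_cases hti : t ≤ i
      · simp [SatB, hti] at hs
      · by_cases hti' : t' ≤ i
        · omega
        · simp only [SatB, if_neg hti', if_neg hti] at hs ⊢
          exact hs.imp (ih1 i).2 (ih2 i).2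
  | lnext φ ih =>
    constructor <;> intro hs
    · by_cases hti : t ≤ i
      · simp [SatB, hti]
      · have hti' : ¬ (t' ≤ i) := by omega
        simp only [SatB, if_neg hti', if_neg hti] at hs ⊢
        exact (ih (i+1)).1 hs
    · by_cases hti : t ≤ i
      · simp [SatB, hti] at hs
      · by_cases hti' : t' ≤ i
        · omega
        · simp only [SatB, if_neg hti', if_neg hti] at hs ⊢
          exact (ih (i+1)).2 hs
  | lsu ψ φ ih1 ih2 =>
    constructor <;> intro hs
    · by_cases hti : t ≤ i
      · simp [SatB, hti]
      · have hti' : ¬ (t' ≤ i) := by omega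
        simp only [SatB, if_neg hti', if_neg hti] at hs ⊢
        rcases hs with ⟨k, hk1, hk2, hψ, hφ⟩ | ⟨hφ, -⟩
        · rcases lt_or_ge k t with hkt | hkt
          · exact Or.inl ⟨k, hk1, hkt, (ih1 k).1 hψ, fun j h1 h2 => (ih2 j).1 (hφ j h1 h2)⟩
          · exact Or.inr ⟨fun j h1 h2 => (ih2 j).1 (hφ j h1 (by omega)), by trivial⟩
        · exact Or.inr ⟨fun j h1 h2 => (ih2 j).1 (hφ j h1 (by omega)), by trivial⟩
    · by_cases hti : t ≤ i
      · simp [SatB, hti] at hs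
      · by_cases hti' : t' ≤ i
        · omega
        · simp only [SatB, if_neg hti', if_neg hti] at hs ⊢
          rcases hs with ⟨k, hk1, hk2, hψ, hφ⟩ | ⟨-, h⟩
          · exact Or.inl ⟨k, hk1, by omega, (ih1 k).2 hψ,
              fun j h1 h2 => (ih2 j).2 (hφ j h1 h2)⟩
          · simp at h

/-- M2: sandwiching the real semantics. -/
theorem satB_sandwich (w : ℕ → Set V) (t : ℕ) (φ : LTL V) (i : ℕ) :
    (SatB w t false φ i → Sat w φ i) ∧ (Sat w φ i → SatB w t true φ i) := by
  induction φ generalizing i with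
  | tt =>
    by_cases hti : t ≤ i <;> simp [SatB, hti, Sat]
  | var v =>
    by_cases hti : t ≤ i <;> simp [SatB, hti, Sat]
  | lnot φ ih =>
    by_cases hti : t ≤ i
    · simp [SatB, hti]
    · simp only [SatB, if_neg hti, Sat, Bool.not_false, Bool.not_true]
      exact ⟨fun h hc => h ((ih i).2 hc), fun h hc => h ((ih i).1 hc)⟩
  | lor φ ψ ih1 ih2 =>
    by_cases hti : t ≤ i
    · simp [SatB, hti]
    · simp only [SatB, if_neg hti, Sat]
      exact ⟨fun h => h.imp (ih1 i).1 (ih2 i).1, fun h => h.imp (ih1 i).2 (ih2 i).2⟩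
  | lnext φ ih =>
    by_cases hti : t ≤ i
    · simp [SatB, hti]
    · simp only [SatB, if_neg hti, Sat]
      exact ⟨(ih (i+1)).1, (ih (i+1)).2⟩
  | lsu ψ φ ih1 ih2 =>
    by_cases hti : t ≤ i
    · simp [SatB, hti]
    · simp only [SatB, if_neg hti, Sat]
      constructor
      · rintro (⟨k, hk1, hk2, hψ, hφ⟩ | ⟨-, h⟩)
        · exact ⟨k, hk1, (ih1 k).1 hψ, fun j h1 h2 => (ih2 j).1 (hφ j h1 h2)⟩
        · simp at h
      · rintro ⟨k, hk1, hψ, hφ⟩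
        rcases lt_or_ge k t with hkt | hkt
        · exact Or.inl ⟨k, hk1, hkt, (ih1 k).2 hψ, fun j h1 h2 => (ih2 j).2 (hφ j h1 h2)⟩
        · exact Or.inr ⟨fun j h1 h2 => (ih2 j).2 (hφ j h1 (by omega)), by trivial⟩

/-- M3: sandwiching `SatA` for arbitrary assignments. -/
theorem satB_satA (w : ℕ → Set V) (t : ℕ) (a : LTL V → Prop) (φ : LTL V) (i : ℕ) :
    (SatA w t a φ i → SatB w t true φ i) ∧ (SatB w t false φ i → SatA w t a φ i) := by
  induction φ generalizing a i with
  | tt =>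
    by_cases hti : t ≤ i <;> simp [SatB, SatA, hti]
  | var v =>
    by_cases hti : t ≤ i <;> simp [SatB, SatA, hti]
  | lnot φ ih =>
    by_cases hti : t ≤ i
    · simp [SatB, SatA, hti]
    · simp only [SatB, SatA, if_neg hti, Bool.not_true, Bool.not_false]
      exact ⟨fun h hc => h ((ih a i).2 hc), fun h hc => h ((ih a i).1 hc)⟩
  | lor φ ψ ih1 ih2 =>
    by_cases hti : t ≤ i
    · simp [SatB, SatA, hti]
    · simp only [SatB, SatA, if_neg hti]
      exact ⟨fun h => h.imp (ih1 a i).1 (ih2 a i).1, fun h => h.imp (ih1 a i).2 (ih2 a i).2⟩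
  | lnext φ ih =>
    by_cases hti : t ≤ i
    · simp [SatB, SatA, hti]
    · simp only [SatB, SatA, if_neg hti]
      exact ⟨(ih a (i+1)).1, (ih a (i+1)).2⟩
  | lsu ψ φ ih1 ih2 =>
    by_cases hti : t ≤ i
    · simp [SatB, SatA, hti]
    · simp only [SatB, SatA, if_neg hti]
      constructor
      · rintro (⟨k, hk1, hk2, hψ, hφ⟩ | ⟨hφ, -⟩)
        · exact Or.inl ⟨k, hk1, hk2, (ih1 a k).1 hψ, fun j h1 h2 => (ih2 a j).1 (hφ j h1 h2)⟩
        · exact Or.inr ⟨fun j h1 h2 => (ih2 a j).1 (hφ j h1 h2), by trivial⟩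
      · rintro (⟨k, hk1, hk2, hψ, hφ⟩ | ⟨-, h⟩)
        · exact Or.inl ⟨k, hk1, hk2, (ih1 a k).2 hψ, fun j h1 h2 => (ih2 a j).2 (hφ j h1 h2)⟩
        · simp at h

theorem sat_lG (w : ℕ → Set V) (φ : LTL V) (i : ℕ) :
    Sat w (lG φ) i ↔ ∀ k, i ≤ k → Sat w φ k := by
  simp only [lG, lF, Sat]
  constructor
  · intro h k hk
    by_contra hc
    exact h ⟨k, hk, hc, fun _ _ _ => trivial⟩
  · rintro h ⟨k, hk, hc, -⟩
    exact hc (h k hk)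


theorem size_pos (φ : LTL V) : 1 ≤ size φ := by
  cases φ <;> simp [size] <;> omega

theorem notSatB_true_lt {w : ℕ → Set V} {t : ℕ} {φ : LTL V} {i : ℕ}
    (h : ¬ SatB w t true φ i) : i < t := by
  by_contra hc
  exact h ((satB_horizon w (by omega) true φ).mpr rfl)

theorem satB_false_lt {w : ℕ → Set V} {t : ℕ} {φ : LTL V} {i : ℕ}
    (h : SatB w t false φ i) : i < t := by
  by_contra hc
  simpa using (satB_horizon w (by omega) false φ).mp h

theorem satB_true_up {w : ℕ → Set V} {t T : ℕ} (h : t ≤ T) {φ : LTL V} {i : ℕ}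
    (hn : ¬ SatB w t true φ i) : ¬ SatB w T true φ i :=
  fun hs => hn ((satB_mono w h φ i).1 hs)

theorem satB_false_up {w : ℕ → Set V} {t T : ℕ} (h : t ≤ T) {φ : LTL V} {i : ℕ}
    (hs : SatB w t false φ i) : SatB w T false φ i :=
  (satB_mono w h φ i).2 hs

theorem satB_true_land {w : ℕ → Set V} {t i : ℕ} (h : i < t) (φ ψ : LTL V) :
    SatB w t true (land φ ψ) i ↔ (SatB w t true φ i ∧ SatB w t true ψ i) := by
  have hn : ¬ (t ≤ i) := by omega
  simp only [land, SatB, if_neg hn, Bool.not_true, Bool.not_false, not_or, not_not]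

theorem satB_false_land {w : ℕ → Set V} {t i : ℕ} (h : i < t) (φ ψ : LTL V) :
    SatB w t false (land φ ψ) i ↔ (SatB w t false φ i ∧ SatB w t false ψ i) := by
  have hn : ¬ (t ≤ i) := by omega
  simp only [land, SatB, if_neg hn, Bool.not_true, Bool.not_false, not_or, not_not]

theorem satB_true_lG {w : ℕ → Set V} {t i : ℕ} (h : i < t) (φ : LTL V) :
    SatB w t true (lG φ) i ↔ ∀ k, i ≤ k → k < t → SatB w t true φ k := by
  have hn : ¬ (t ≤ i) := by omega
  simp only [lG, lF, SatB, if_neg hn, Bool.not_true]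
  constructor
  · intro hs k hk1 hk2
    by_contra hc
    refine hs (Or.inl ⟨k, hk1, hk2, ?_, fun j h1 h2 => ?_⟩)
    · simp only [SatB, if_neg (show ¬ (t ≤ k) by omega), Bool.not_false]
      exact hc
    · simp [SatB, show ¬ (t ≤ j) by omega]
  · rintro hs (⟨k, hk1, hk2, hk3, -⟩ | ⟨-, hfalse⟩)
    · simp only [SatB, if_neg (show ¬ (t ≤ k) by omega), Bool.not_false] at hk3
      exact hk3 (hs k hk1 hk2)
    · simp at hfalse

theorem satB_lor {w : ℕ → Set V} {t i : ℕ} (h : i < t) (b : Bool) (φ ψ : LTL V) :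
    SatB w t b (LTL.lor φ ψ) i ↔ (SatB w t b φ i ∨ SatB w t b ψ i) := by
  have hn : ¬ (t ≤ i) := by omega
  simp only [SatB, if_neg hn]

theorem satB_lsu {w : ℕ → Set V} {t i : ℕ} (h : i < t) (b : Bool) (ψ φ : LTL V) :
    SatB w t b (LTL.lsu ψ φ) i ↔
      ((∃ k, i ≤ k ∧ k < t ∧ SatB w t b ψ k ∧ ∀ j, i ≤ j → j < k → SatB w t b φ j) ∨
       ((∀ j, i ≤ j → j < t → SatB w t b φ j) ∧ b = true)) := by
  have hn : ¬ (t ≤ i) := by omega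
  rw [show SatB w t b (LTL.lsu ψ φ) i = if t ≤ i then b = true else
      ((∃ k, i ≤ k ∧ k < t ∧ SatB w t b ψ k ∧ ∀ j, i ≤ j → j < k → SatB w t b φ j) ∨
       ((∀ j, i ≤ j → j < t → SatB w t b φ j) ∧ b = true)) from rfl, if_neg hn]

theorem sat_land {w : ℕ → Set V} {i : ℕ} (φ ψ : LTL V) :
    Sat w (land φ ψ) i ↔ (Sat w φ i ∧ Sat w ψ i) := by
  simp only [land, Sat, not_or, not_not]

/-- M4: the main safety/co-safety lemma for `TL_G` and `TL_F`. -/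
theorem satB_main_aux (n : ℕ) : ∀ (φ : LTL V), size φ ≤ n → ∀ (w : ℕ → Set V) (i : ℕ),
    (TLG φ → (∀ t, SatB w t true φ i) → Sat w φ i) ∧
    (TLF φ → Sat w φ i → ∃ t, SatB w t false φ i) := by
  induction n with
  | zero => intro φ hφ; have := size_pos φ; omega
  | succ n ih =>
    intro φ hφ w i
    constructor
    · intro hG hall
      cases hG with
      | var v =>
        have := hall (i+1)
        simp only [SatB, if_neg (show ¬ (i+1 ≤ i) by omega)] at this
        simpa [Sat] using this
      | @not χ hF =>
        simp only [Sat]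
        intro hc
        obtain ⟨t, ht⟩ := (ih χ (by simp [size] at hφ; omega) w i).2 hF hc
        have hit : i < t := satB_false_lt ht
        have h2 := hall t
        simp only [SatB, if_neg (show ¬ (t ≤ i) by omega), Bool.not_true] at h2
        exact h2 ht
      | @and χ ξ h1 h2 =>
        have hsz : size χ ≤ n ∧ size ξ ≤ n := by
          simp [land, size] at hφ; omega
        rw [sat_land]
        constructor
        · refine (ih χ hsz.1 w i).1 h1 fun t => ?_
          rcases le_or_gt t i with h | h
          · exact (satB_horizon w h true χ).mpr rfl
          · exact ((satB_true_land h χ ξ).mp (hall t)).1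
        · refine (ih ξ hsz.2 w i).1 h2 fun t => ?_
          rcases le_or_gt t i with h | h
          · exact (satB_horizon w h true ξ).mpr rfl
          · exact ((satB_true_land h χ ξ).mp (hall t)).2
      | @or χ ξ h1 h2 =>
        have hsz : size χ ≤ n ∧ size ξ ≤ n := by
          simp [size] at hφ; omega
        simp only [Sat]
        by_contra hc
        push_neg at hc
        have hc1 : ¬ ∀ t, SatB w t true χ i :=
          fun hh => hc.1 ((ih χ hsz.1 w i).1 h1 hh)
        have hc2 : ¬ ∀ t, SatB w t true ξ i :=
          fun hh => hc.2 ((ih ξ hsz.2 w i).1 h2 hh)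
        push_neg at hc1 hc2
        obtain ⟨t1, ht1⟩ := hc1
        obtain ⟨t2, ht2⟩ := hc2
        have hi1 : i < t1 := notSatB_true_lt ht1
        have h3 := hall (max t1 t2)
        simp only [SatB, if_neg (show ¬ (max t1 t2 ≤ i) by omega)] at h3
        rcases h3 with h3 | h3
        · exact satB_true_up (le_max_left _ _) ht1 h3
        · exact satB_true_up (le_max_right _ _) ht2 h3
      | @next χ h1 =>
        have hsz : size χ ≤ n := by simp [size] at hφ; omega
        simp only [Sat]
        refine (ih χ hsz w (i+1)).1 h1 fun t => ?_
        rcases le_or_gt t (i+1) with h | h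
        · exact (satB_horizon w h true χ).mpr rfl
        · have := hall t
          simpa only [SatB, if_neg (show ¬ (t ≤ i) by omega)] using this
      | @alw χ h1 =>
        have hsz : size χ ≤ n := by simp [lG, lF, size] at hφ; omega
        rw [sat_lG]
        intro k hk
        refine (ih χ hsz w k).1 h1 fun t => ?_
        rcases le_or_gt t k with h | h
        · exact (satB_horizon w h true χ).mpr rfl
        · exact (satB_true_lG (by omega) χ).mp (hall t) k hk h
      | @wu χ ξ h1 h2 =>
        -- lwu χ ξ = lor (lsu χ ξ) (lG ξ)
        have hsz : size χ ≤ n ∧ size ξ ≤ n := by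
          simp [lwu, lG, lF, size] at hφ; omega
        show Sat w (LTL.lsu χ ξ) i ∨ Sat w (lG ξ) i
        by_cases hAll : ∀ k, i ≤ k → Sat w ξ k
        · right
          rw [sat_lG]; exact hAll
        · left
          push_neg at hAll
          -- minimal counterexample k0
          have hex : ∃ k, i ≤ k ∧ ¬ Sat w ξ k := by
            obtain ⟨k, hk1, hk2⟩ := hAll; exact ⟨k, hk1, hk2⟩
          classical
          let k0 := Nat.find hex
          obtain ⟨hk0i, hk0n⟩ : i ≤ k0 ∧ ¬ Sat w ξ k0 := Nat.find_spec hex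
          have hmin : ∀ j, i ≤ j → j < k0 → Sat w ξ j := by
            intro j hj1 hj2
            by_contra hc
            exact Nat.find_min hex hj2 ⟨hj1, hc⟩
          -- ¬ Sat ξ k0 gives a horizon refuting ξ at k0
          have : ¬ ∀ t, SatB w t true ξ k0 :=
            fun hh => hk0n ((ih ξ hsz.2 w k0).1 h2 hh)
          push_neg at this
          obtain ⟨t0, ht0⟩ := this
          have hk0t0 : k0 < t0 := notSatB_true_lt ht0
          -- find k ∈ [i, k0] with Sat χ k
          have key : ∃ k, i ≤ k ∧ k ≤ k0 ∧ Sat w χ k := by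
            by_contra hc
            push_neg at hc
            have href : ∀ k, ∃ t, (i ≤ k → k ≤ k0 → ¬ SatB w t true χ k) := by
              intro k
              by_cases hk : i ≤ k ∧ k ≤ k0
              · have : ¬ ∀ t, SatB w t true χ k :=
                  fun hh => hc k hk.1 hk.2 ((ih χ hsz.1 w k).1 h1 hh)
                push_neg at this
                obtain ⟨t, ht⟩ := this
                exact ⟨t, fun _ _ => ht⟩
              · exact ⟨0, fun h1' h2' => absurd ⟨h1', h2'⟩ hk⟩
            choose g hg using href
            set T := max t0 ((Finset.range (k0+1)).sup g) with hT
            have hTt0 : t0 ≤ T := le_max_left _ _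
            have hgT : ∀ k, k ≤ k0 → g k ≤ T := by
              intro k hk
              exact le_trans (Finset.le_sup (Finset.mem_range.mpr (by omega))) (le_max_right _ _)
            have hiT : i < T := by omega
            have h4 : SatB w T true (LTL.lor (LTL.lsu χ ξ) (lG ξ)) i := hall T
            rw [satB_lor (show i < T by omega)] at h4
            rcases h4 with h4 | h4
            · -- SatB true (lsu χ ξ) i
              rw [satB_lsu (show i < T by omega)] at h4
              rcases h4 with ⟨k, hk1, hk2, hχ, hξ⟩ | ⟨hξ, -⟩
              · rcases le_or_gt k k0 with hkk | hkk
                · exact satB_true_up (hgT k hkk) (hg k hk1 hkk) hχ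
                · exact satB_true_up hTt0 ht0 (hξ k0 hk0i hkk)
              · exact satB_true_up hTt0 ht0 (hξ k0 hk0i (by omega))
            · -- SatB true (lG ξ) i
              have := (satB_true_lG (show i < T by omega) ξ).mp h4 k0 hk0i (by omega)
              exact satB_true_up hTt0 ht0 this
          obtain ⟨k, hk1, hk2, hχ⟩ := key
          exact ⟨k, hk1, hχ, fun j hj1 hj2 => hmin j hj1 (by omega)⟩
    · intro hF hSat
      cases hF with
      | var v =>
        refine ⟨i+1, ?_⟩
        simp only [SatB, if_neg (show ¬ (i+1 ≤ i) by omega)]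
        simpa [Sat] using hSat
      | @not χ hG =>
        simp only [Sat] at hSat
        have : ¬ ∀ t, SatB w t true χ i :=
          fun hh => hSat ((ih χ (by simp [size] at hφ; omega) w i).1 hG hh)
        push_neg at this
        obtain ⟨t, ht⟩ := this
        have hit : i < t := notSatB_true_lt ht
        refine ⟨t, ?_⟩
        simp only [SatB, if_neg (show ¬ (t ≤ i) by omega), Bool.not_false]
        exact ht
      | @and χ ξ h1 h2 =>
        have hsz : size χ ≤ n ∧ size ξ ≤ n := by
          simp [land, size] at hφ; omega
        rw [sat_land] at hSat
        obtain ⟨t1, ht1⟩ := (ih χ hsz.1 w i).2 h1 hSat.1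
        obtain ⟨t2, ht2⟩ := (ih ξ hsz.2 w i).2 h2 hSat.2
        have hi1 : i < t1 := satB_false_lt ht1
        refine ⟨max t1 t2, (satB_false_land (by omega) χ ξ).mpr ?_⟩
        exact ⟨satB_false_up (le_max_left _ _) ht1, satB_false_up (le_max_right _ _) ht2⟩
      | @or χ ξ h1 h2 =>
        have hsz : size χ ≤ n ∧ size ξ ≤ n := by
          simp [size] at hφ; omega
        simp only [Sat] at hSat
        rcases hSat with hSat | hSat
        · obtain ⟨t, ht⟩ := (ih χ hsz.1 w i).2 h1 hSat
          have := satB_false_lt ht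
          refine ⟨t, ?_⟩
          simp only [SatB, if_neg (show ¬ (t ≤ i) by omega)]
          exact Or.inl ht
        · obtain ⟨t, ht⟩ := (ih ξ hsz.2 w i).2 h2 hSat
          have := satB_false_lt ht
          refine ⟨t, ?_⟩
          simp only [SatB, if_neg (show ¬ (t ≤ i) by omega)]
          exact Or.inr ht
      | @next χ h1 =>
        have hsz : size χ ≤ n := by simp [size] at hφ; omega
        simp only [Sat] at hSat
        obtain ⟨t, ht⟩ := (ih χ hsz w (i+1)).2 h1 hSat
        have := satB_false_lt ht
        refine ⟨t, ?_⟩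
        simp only [SatB, if_neg (show ¬ (t ≤ i) by omega)]
        exact ht
      | @ev χ h1 =>
        have hsz : size χ ≤ n := by simp [lF, size] at hφ; omega
        simp only [lF, Sat] at hSat
        obtain ⟨k, hk1, hχ, -⟩ := hSat
        obtain ⟨t, ht⟩ := (ih χ hsz w k).2 h1 hχ
        have hkt : k < t := satB_false_lt ht
        refine ⟨t, ?_⟩
        simp only [lF, SatB, if_neg (show ¬ (t ≤ i) by omega)]
        refine Or.inl ⟨k, hk1, hkt, ht, fun j hj1 hj2 => ?_⟩
        simp [SatB, show ¬ (t ≤ j) by omega]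
      | @su χ ξ h1 h2 =>
        have hsz : size χ ≤ n ∧ size ξ ≤ n := by
          simp [size] at hφ; omega
        simp only [Sat] at hSat
        obtain ⟨k, hk1, hχ, hξ⟩ := hSat
        obtain ⟨t0, ht0⟩ := (ih χ hsz.1 w k).2 h1 hχ
        have hkt0 : k < t0 := satB_false_lt ht0
        classical
        have href : ∀ j, ∃ t, (i ≤ j → j < k → SatB w t false ξ j) := by
          intro j
          by_cases hj : i ≤ j ∧ j < k
          · obtain ⟨t, ht⟩ := (ih ξ hsz.2 w j).2 h2 (hξ j hj.1 hj.2)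
            exact ⟨t, fun _ _ => ht⟩
          · exact ⟨0, fun h1' h2' => absurd ⟨h1', h2'⟩ hj⟩
        choose g hg using href
        set T := max t0 ((Finset.range k).sup g) with hT
        have hgT : ∀ j, j < k → g j ≤ T :=
          fun j hj => le_trans (Finset.le_sup (Finset.mem_range.mpr hj)) (le_max_right _ _)
        refine ⟨T, ?_⟩
        simp only [SatB, if_neg (show ¬ (T ≤ i) by omega)]
        refine Or.inl ⟨k, hk1, by omega, satB_false_up (le_max_left _ _) ht0,
          fun j hj1 hj2 => satB_false_up (hgT j hj2) (hg j hj1 hj2)⟩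

theorem satB_main (φ : LTL V) (w : ℕ → Set V) (i : ℕ) :
    (TLG φ → (∀ t, SatB w t true φ i) → Sat w φ i) ∧
    (TLF φ → Sat w φ i → ∃ t, SatB w t false φ i) :=
  satB_main_aux (size φ) φ le_rfl w i

/-! ### The automaton -/

section Automaton

variable (Φ : LTL V)

abbrev SF (Φ : LTL V) : Type := {ψ : LTL V // ψ ∈ sub Φ}

noncomputable instance : Fintype (SF Φ) := by
  classical exact Fintype.subtype (sub Φ).toFinset (by simp [SF])

abbrev AState (Φ : LTL V) : Type := (SF Φ → Prop) → Prop

noncomputable instance : Fintype (AState Φ) := by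
  classical exact inferInstanceAs (Fintype ((SF Φ → Prop) → Prop))

theorem card_AState : Fintype.card (AState Φ) ≤ 2 ^ (2 ^ size Φ) := by
  classical
  have hsf : Fintype.card (SF Φ) ≤ size Φ := by
    have h1 : Fintype.card (SF Φ) = (sub Φ).toFinset.card :=
      Fintype.card_of_subtype (sub Φ).toFinset (by simp)
    rw [h1]
    calc (sub Φ).toFinset.card ≤ (sub Φ).length := List.toFinset_card_le _
      _ = size Φ := sub_length Φ
  have h2 : Fintype.card (AState Φ) = 2 ^ (2 ^ Fintype.card (SF Φ)) := by
    rw [show Fintype.card (AState Φ) = Fintype.card Prop ^ Fintype.card (SF Φ → Prop) from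
      Fintype.card_fun, show Fintype.card (SF Φ → Prop) = Fintype.card Prop ^ Fintype.card (SF Φ)
      from Fintype.card_fun]
    norm_num [show Fintype.card Prop = 2 from rfl]
  rw [h2]
  exact Nat.pow_le_pow_right (by norm_num) (Nat.pow_le_pow_right (by norm_num) hsf)

def restr (b : LTL V → Prop) : SF Φ → Prop := fun ψ => b ψ.val

def extend (a : SF Φ → Prop) : LTL V → Prop :=
  fun χ => @dite _ (χ ∈ sub Φ) (Classical.propDecidable _) (fun h => a ⟨χ, h⟩) (fun _ => True)

def aInit : AState Φ := fun a => a ⟨Φ, self_mem_sub Φ⟩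

def aStep : AState Φ → Set V → AState Φ :=
  fun D σ a => D (fun ψ => step σ (extend Φ a) ψ.val)

theorem detRun_inv (w : ℕ → Set V) (t : ℕ) (b : LTL V → Prop) :
    detRun (aStep Φ) (aInit Φ) w t (restr Φ b) ↔ SatA w t b Φ 0 := by
  induction t generalizing b with
  | zero =>
    show b Φ ↔ SatA w 0 b Φ 0
    exact (satA_horizon w le_rfl b Φ).symm
  | succ t ih =>
    have hfun : (fun ψ : SF Φ => step (w t) (extend Φ (restr Φ b)) ψ.val)
        = restr Φ (fun χ => step (w t) b χ) := by
      funext ψ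
      apply propext
      apply step_congr
      intro χ hχ
      have hmem : χ ∈ sub Φ := sub_trans ψ.2 hχ
      show extend Φ (restr Φ b) χ ↔ b χ
      rw [show extend Φ (restr Φ b) χ = restr Φ b ⟨χ, hmem⟩ from dif_pos hmem]
      exact Iff.rfl
    show (detRun (aStep Φ) (aInit Φ) w t)
      (fun ψ : SF Φ => step (w t) (extend Φ (restr Φ b)) ψ.val) ↔ _
    rw [hfun]
    exact (ih _).trans (satA_succ w t b Φ 0 (Nat.zero_le t)).symm

theorem restr_extend (a : SF Φ → Prop) : restr Φ (extend Φ a) = a := by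
  funext ψ
  exact dif_pos ψ.2

def FSet : Set (AState Φ) := {D | ∃ a, D a}
def ESet : Set (AState Φ) := {D | ∀ a, D a}

theorem mem_FSet (w : ℕ → Set V) (t : ℕ) :
    detRun (aStep Φ) (aInit Φ) w t ∈ FSet Φ ↔ ∃ b : LTL V → Prop, SatA w t b Φ 0 := by
  constructor
  · rintro ⟨a, ha⟩
    refine ⟨extend Φ a, ?_⟩
    rw [← detRun_inv]
    rwa [restr_extend]
  · rintro ⟨b, hb⟩
    exact ⟨restr Φ b, (detRun_inv Φ w t b).mpr hb⟩

theorem mem_ESet (w : ℕ → Set V) (t : ℕ) :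
    detRun (aStep Φ) (aInit Φ) w t ∈ ESet Φ ↔ ∀ b : LTL V → Prop, SatA w t b Φ 0 := by
  constructor
  · intro ha b
    exact (detRun_inv Φ w t b).mp (ha (restr Φ b))
  · intro hb a
    have := (detRun_inv Φ w t (extend Φ a)).mpr (hb (extend Φ a))
    rwa [restr_extend] at this

end Automaton

/-! ### Good automata: the induction predicate -/

def Good (Φ : LTL V) : Prop :=
  ∃ (S : Type) (_ : Fintype S) (s0 : S) (δ : S → Set V → S)
    (J : Type) (_ : Fintype J) (_ : Nonempty J) (Fs Es : J → Set S),
    Fintype.card S ≤ 2 ^ (2 ^ size Φ) ∧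
    (∀ (w : ℕ → Set V) (j : J) (t : ℕ),
      (detRun δ s0 w t ∉ Fs j → detRun δ s0 w (t+1) ∉ Fs j) ∧
      (detRun δ s0 w t ∈ Es j → detRun δ s0 w (t+1) ∈ Es j)) ∧
    ∀ w : ℕ → Set V,
      ((∀ j, (∀ t, detRun δ s0 w t ∈ Fs j) ∨ (∃ t, detRun δ s0 w t ∈ Es j))
        ↔ Sat w Φ 0)

theorem detRun_prod {S1 S2 A : Type} (δ1 : S1 → A → S1) (δ2 : S2 → A → S2)
    (s01 : S1) (s02 : S2) (w : ℕ → A) (t : ℕ) :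
    detRun (fun p a => (δ1 p.1 a, δ2 p.2 a)) (s01, s02) w t
      = (detRun δ1 s01 w t, detRun δ2 s02 w t) := by
  induction t with
  | zero => rfl
  | succ t ih => simp [detRun, ih]

theorem good_of_TLG {Φ : LTL V} (h : TLG Φ) : Good Φ := by
  refine ⟨AState Φ, inferInstance, aInit Φ, aStep Φ, PUnit, inferInstance, ⟨PUnit.unit⟩,
    fun _ => FSet Φ, fun _ => (∅ : Set (AState Φ)), card_AState Φ, ?_, ?_⟩
  · intro w _ t
    refine ⟨?_, by simp⟩
    intro hF hF'
    apply hF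
    rw [mem_FSet] at hF' ⊢
    obtain ⟨b, hb⟩ := hF'
    exact ⟨fun χ => step (w t) b χ, (satA_succ w t b Φ 0 (Nat.zero_le t)).mp hb⟩
  · intro w
    constructor
    · intro hacc
      have hall : ∀ t, ∃ b : LTL V → Prop, SatA w t b Φ 0 := by
        intro t
        rcases hacc PUnit.unit with h1 | h1
        · exact (mem_FSet Φ w t).mp (h1 t)
        · obtain ⟨t', ht'⟩ := h1
          simp at ht'
      refine (satB_main Φ w 0).1 h fun t => ?_
      obtain ⟨b, hb⟩ := hall t
      exact (satB_satA w t b Φ 0).1 hb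
    · intro hSat j
      left
      intro t
      rw [mem_FSet]
      exact ⟨fun χ => Sat w χ t, (satA_truth w t Φ (Nat.zero_le t)).mpr hSat⟩

theorem good_of_TLF {Φ : LTL V} (h : TLF Φ) : Good Φ := by
  refine ⟨AState Φ, inferInstance, aInit Φ, aStep Φ, PUnit, inferInstance, ⟨PUnit.unit⟩,
    fun _ => (∅ : Set (AState Φ)), fun _ => ESet Φ, card_AState Φ, ?_, ?_⟩
  · intro w _ t
    refine ⟨by simp, ?_⟩
    intro hE
    rw [mem_ESet] at hE ⊢
    intro b
    exact (satA_succ w t b Φ 0 (Nat.zero_le t)).mpr (hE _)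
  · intro w
    constructor
    · intro hacc
      rcases hacc PUnit.unit with h1 | h1
      · simpa using h1 0
      · obtain ⟨t, ht⟩ := h1
        rw [mem_ESet] at ht
        exact (satA_truth w t Φ (Nat.zero_le t)).mp (ht _)
    · intro hSat j
      right
      obtain ⟨t, ht⟩ := (satB_main Φ w 0).2 h hSat
      refine ⟨t, (mem_ESet Φ w t).mpr fun b => ?_⟩
      exact (satB_satA w t b Φ 0).2 ht

theorem good_not {Φ : LTL V} (h : Good Φ) : Good (lnot Φ) := by
  classical
  obtain ⟨S, iS, s0, δ, J, iJ, nJ, Fs, Es, hcard, habs, hacc⟩ := h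
  refine ⟨S, iS, s0, δ, J → Bool, inferInstance, ⟨fun _ => true⟩,
    fun c => {s | ∃ j, c j = false ∧ s ∉ Es j},
    fun c => {s | ∃ j, c j = true ∧ s ∉ Fs j}, ?_, ?_, ?_⟩
  · refine le_trans hcard (Nat.pow_le_pow_right (by norm_num)
      (Nat.pow_le_pow_right (by norm_num) ?_))
    simp [size]
  · intro w c t
    constructor
    · intro hF hF'
      apply hF
      obtain ⟨j, hj1, hj2⟩ := hF'
      refine ⟨j, hj1, fun hmem => hj2 ((habs w j t).2 hmem)⟩
    · rintro ⟨j, hj1, hj2⟩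
      exact ⟨j, hj1, (habs w j t).1 hj2⟩
  · intro w
    rw [show Sat w (lnot Φ) 0 ↔ ¬ Sat w Φ 0 from Iff.rfl, ← hacc w]
    set r := detRun δ s0 w with hr
    have persistE : ∀ (j : J) (t T : ℕ), t ≤ T → r t ∈ Es j → r T ∈ Es j := by
      intro j t T hle ht
      induction T, hle using Nat.le_induction with
      | base => exact ht
      | succ T hT ihT => exact (habs w j T).2 ihT
    have persistF : ∀ (j : J) (t T : ℕ), t ≤ T → r t ∉ Fs j → r T ∉ Fs j := by
      intro j t T hle ht
      induction T, hle using Nat.le_induction with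
      | base => exact ht
      | succ T hT ihT => exact (habs w j T).1 ihT
    constructor
    · intro hacc' hA
      set c : J → Bool := fun j => decide (∀ t, r t ∈ Fs j) with hc
      have hg : ∀ j, ∃ t, (c j = false → r t ∈ Es j) := by
        intro j
        by_cases hAj : ∀ t, r t ∈ Fs j
        · exact ⟨0, fun hc' => by simp [hc, hAj] at hc'⟩
        · rcases hA j with h1 | h1
          · exact absurd h1 hAj
          · obtain ⟨t, ht⟩ := h1
            exact ⟨t, fun _ => ht⟩
      choose g hg using hg
      rcases hacc' c with hcl | hcl
      · set T := Finset.univ.sup g with hT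
        obtain ⟨j, hj1, hj2⟩ := hcl T
        exact hj2 (persistE j (g j) T (Finset.le_sup (Finset.mem_univ j)) (hg j hj1))
      · obtain ⟨t, j, hj1, hj2⟩ := hcl
        have : ∀ s, r s ∈ Fs j := of_decide_eq_true hj1
        exact hj2 (this t)
    · intro hn c
      push_neg at hn
      obtain ⟨j0, ⟨t0, ht0⟩, hEs⟩ := hn
      cases hcj : c j0 with
      | false => exact Or.inl fun t => ⟨j0, hcj, hEs t⟩
      | true => exact Or.inr ⟨t0, j0, hcj, ht0⟩

theorem pow_card_bound {c1 c2 s1 s2 s : ℕ} (h1 : c1 ≤ 2 ^ 2 ^ s1) (h2 : c2 ≤ 2 ^ 2 ^ s2)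
    (hs : s1 + s2 + 1 ≤ s) : c1 * c2 ≤ 2 ^ 2 ^ s := by
  calc c1 * c2 ≤ 2 ^ 2 ^ s1 * 2 ^ 2 ^ s2 := Nat.mul_le_mul h1 h2
    _ = 2 ^ (2 ^ s1 + 2 ^ s2) := (pow_add 2 _ _).symm
    _ ≤ 2 ^ 2 ^ s := by
        refine Nat.pow_le_pow_right (by norm_num) ?_
        have e1 : 2 ^ s1 ≤ 2 ^ (s1 + s2) := Nat.pow_le_pow_right (by norm_num) (by omega)
        have e2 : 2 ^ s2 ≤ 2 ^ (s1 + s2) := Nat.pow_le_pow_right (by norm_num) (by omega)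
        have e3 : 2 ^ (s1 + s2) + 2 ^ (s1 + s2) = 2 ^ (s1 + s2 + 1) := by ring
        have e4 : 2 ^ (s1 + s2 + 1) ≤ 2 ^ s := Nat.pow_le_pow_right (by norm_num) hs
        omega

theorem good_and {Φ Ψ : LTL V} (h1 : Good Φ) (h2 : Good Ψ) : Good (land Φ Ψ) := by
  classical
  obtain ⟨S1, iS1, s01, δ1, J1, iJ1, nJ1, Fs1, Es1, hcard1, habs1, hacc1⟩ := h1
  obtain ⟨S2, iS2, s02, δ2, J2, iJ2, nJ2, Fs2, Es2, hcard2, habs2, hacc2⟩ := h2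
  obtain ⟨j1⟩ := nJ1
  refine ⟨S1 × S2, inferInstance, (s01, s02), fun p a => (δ1 p.1 a, δ2 p.2 a),
    J1 ⊕ J2, inferInstance, ⟨Sum.inl j1⟩,
    Sum.elim (fun j => Prod.fst ⁻¹' Fs1 j) (fun j => Prod.snd ⁻¹' Fs2 j),
    Sum.elim (fun j => Prod.fst ⁻¹' Es1 j) (fun j => Prod.snd ⁻¹' Es2 j), ?_, ?_, ?_⟩
  · rw [Fintype.card_prod]
    exact pow_card_bound hcard1 hcard2 (by simp [land, size]; omega)
  · intro w j t
    rcases j with j | j <;>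
      simp only [detRun_prod, Sum.elim_inl, Sum.elim_inr, Set.mem_preimage]
    · exact habs1 w j t
    · exact habs2 w j t
  · intro w
    rw [sat_land, ← hacc1 w, ← hacc2 w]
    constructor
    · intro hacc
      constructor
      · intro j
        rcases hacc (Sum.inl j) with h | h
        · left; intro t; have := h t; simpa [detRun_prod] using this
        · right; obtain ⟨t, ht⟩ := h; exact ⟨t, by simpa [detRun_prod] using ht⟩
      · intro j
        rcases hacc (Sum.inr j) with h | h
        · left; intro t; have := h t; simpa [detRun_prod] using this
        · right; obtain ⟨t, ht⟩ := h; exact ⟨t, by simpa [detRun_prod] using ht⟩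
    · intro hacc j
      rcases j with j | j
      · rcases hacc.1 j with h | h
        · left; intro t; simpa [detRun_prod] using h t
        · right; obtain ⟨t, ht⟩ := h; exact ⟨t, by simpa [detRun_prod] using ht⟩
      · rcases hacc.2 j with h | h
        · left; intro t; simpa [detRun_prod] using h t
        · right; obtain ⟨t, ht⟩ := h; exact ⟨t, by simpa [detRun_prod] using ht⟩

theorem good_or {Φ Ψ : LTL V} (h1 : Good Φ) (h2 : Good Ψ) : Good (lor Φ Ψ) := by
  classical
  obtain ⟨S1, iS1, s01, δ1, J1, iJ1, nJ1, Fs1, Es1, hcard1, habs1, hacc1⟩ := h1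
  obtain ⟨S2, iS2, s02, δ2, J2, iJ2, nJ2, Fs2, Es2, hcard2, habs2, hacc2⟩ := h2
  obtain ⟨j1⟩ := nJ1
  obtain ⟨j2⟩ := nJ2
  refine ⟨S1 × S2, inferInstance, (s01, s02), fun p a => (δ1 p.1 a, δ2 p.2 a),
    J1 × J2, inferInstance, ⟨(j1, j2)⟩,
    fun j => (Prod.fst ⁻¹' Fs1 j.1) ∪ (Prod.snd ⁻¹' Fs2 j.2),
    fun j => (Prod.fst ⁻¹' Es1 j.1) ∪ (Prod.snd ⁻¹' Es2 j.2), ?_, ?_, ?_⟩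
  · rw [Fintype.card_prod]
    exact pow_card_bound hcard1 hcard2 (by simp [size])
  · intro w j t
    constructor
    · intro hF hF'
      apply hF
      simp only [detRun_prod, Set.mem_union, Set.mem_preimage] at hF' ⊢
      rcases hF' with h | h
      · left; by_contra hc; exact (habs1 w j.1 t).1 hc h
      · right; by_contra hc; exact (habs2 w j.2 t).1 hc h
    · intro hE
      simp only [detRun_prod, Set.mem_union, Set.mem_preimage] at hE ⊢
      rcases hE with h | h
      · exact Or.inl ((habs1 w j.1 t).2 h)
      · exact Or.inr ((habs2 w j.2 t).2 h)
  · intro w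
    rw [show Sat w (LTL.lor Φ Ψ) 0 ↔ (Sat w Φ 0 ∨ Sat w Ψ 0) from Iff.rfl,
      ← hacc1 w, ← hacc2 w]
    have persistF1 : ∀ (j : J1) (t T : ℕ), t ≤ T →
        detRun δ1 s01 w t ∉ Fs1 j → detRun δ1 s01 w T ∉ Fs1 j := by
      intro j t T hle ht
      induction T, hle using Nat.le_induction with
      | base => exact ht
      | succ T hT ihT => exact (habs1 w j T).1 ihT
    have persistF2 : ∀ (j : J2) (t T : ℕ), t ≤ T →
        detRun δ2 s02 w t ∉ Fs2 j → detRun δ2 s02 w T ∉ Fs2 j := by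
      intro j t T hle ht
      induction T, hle using Nat.le_induction with
      | base => exact ht
      | succ T hT ihT => exact (habs2 w j T).1 ihT
    constructor
    · intro hacc
      by_cases hA1 : ∀ j, (∀ t, detRun δ1 s01 w t ∈ Fs1 j) ∨ (∃ t, detRun δ1 s01 w t ∈ Es1 j)
      · exact Or.inl hA1
      right
      push_neg at hA1
      obtain ⟨j0, ⟨t0, ht0⟩, hEs⟩ := hA1
      intro j
      rcases hacc (j0, j) with h | h
      · left
        intro t
        by_contra hc
        rcases le_total t t0 with hle | hle
        · have h2 := h t0
          simp only [detRun_prod, Set.mem_union, Set.mem_preimage] at h2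
          rcases h2 with h2 | h2
          · exact ht0 h2
          · exact persistF2 j t t0 hle hc h2
        · have h2 := h t
          simp only [detRun_prod, Set.mem_union, Set.mem_preimage] at h2
          rcases h2 with h2 | h2
          · exact persistF1 j0 t0 t hle ht0 h2
          · exact hc h2
      · right
        obtain ⟨t, ht⟩ := h
        simp only [detRun_prod, Set.mem_union, Set.mem_preimage] at ht
        rcases ht with ht | ht
        · exact absurd ht (hEs t)
        · exact ⟨t, ht⟩
    · intro hacc j
      rcases hacc with hacc | hacc
      · rcases hacc j.1 with h | h
        · left
          intro t
          simp only [detRun_prod, Set.mem_union, Set.mem_preimage]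
          exact Or.inl (h t)
        · obtain ⟨t, ht⟩ := h
          right
          refine ⟨t, ?_⟩
          simp only [detRun_prod, Set.mem_union, Set.mem_preimage]
          exact Or.inl ht
      · rcases hacc j.2 with h | h
        · left
          intro t
          simp only [detRun_prod, Set.mem_union, Set.mem_preimage]
          exact Or.inr (h t)
        · obtain ⟨t, ht⟩ := h
          right
          refine ⟨t, ?_⟩
          simp only [detRun_prod, Set.mem_union, Set.mem_preimage]
          exact Or.inr ht

theorem good_of_TLPrefix {Φ : LTL V} (h : TLPrefix Φ) : Good Φ := by
  induction h with
  | g h => exact good_of_TLG h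
  | f h => exact good_of_TLF h
  | not _ ih => exact good_not ih
  | and _ _ ih1 ih2 => exact good_and ih1 ih2
  | or _ _ ih1 ih2 => exact good_or ih1 ih2

end LTLProof
/-- every `TL_Prefix` formula `Φ` is recognized by a deterministic
ω-automaton with a prefix acceptance condition (pairs `(Fs j, Es j)`, `j = 0,…,f`:
the run always stays in `Fs j` or visits `Es j` at least once, for every `j`)
and at most `2 ^ 2 ^ |Φ|` states. -/
theorem tlPrefix_deterministic_prefix_automaton
    {V : Type} [Fintype V] (Φ : LTL V) (hΦ : LTL.TLPrefix Φ) :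
    ∃ (S : Type) (_ : Fintype S) (s0 : S) (δ : S → Set V → S) (f : ℕ)
      (Fs Es : Fin (f + 1) → Set S),
      Fintype.card S ≤ 2 ^ (2 ^ LTL.size Φ) ∧
      ∀ w : ℕ → Set V,
        ((∀ j, (∀ t, detRun δ s0 w t ∈ Fs j) ∨ (∃ t, detRun δ s0 w t ∈ Es j))
          ↔ LTL.Sat w Φ 0) := by
  obtain ⟨S, iS, s0, δ, J, iJ, nJ, Fs, Es, hcard, habs, hacc⟩ :=
    LTLProof.good_of_TLPrefix hΦ
  have hpos : 0 < Fintype.card J := Fintype.card_pos_iff.mpr nJ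
  have e : J ≃ Fin (Fintype.card J - 1 + 1) :=
    (Fintype.equivFin J).trans (finCongr (by omega))
  refine ⟨S, iS, s0, δ, Fintype.card J - 1, fun k => Fs (e.symm k),
    fun k => Es (e.symm k), hcard, ?_⟩
  intro w
  rw [← hacc w]
  constructor
  · intro h j
    simpa using h (e j)
  · intro h k
    exact h (e.symm k)
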